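/- (Theorem 3(ii), scenario H₂.) Under the perturbation conditions (D₁, E₁, H₂), for every i ∈ {1, …, N} the conditional quasi-stationary probability satisfies π̃_i(ε) = c̃_i[0] + c̃_i[1] ε + õ_i(ε) for ε ∈ (0, ε₀], where õ_i(ε)/ε → 0 as ε → 0+, c̃_i[0] = c_i[1]/d[1] > 0 and c̃_i[1] = ( c_i[2] d[1] − c_i[1] d[2] ) / d[1]², where d[l] = Σ_{j=1}^{N} c_j[l] for l = 1, 2 and, for j ∈ {1, …, N}, c_j[1] > 0 and c_j[2] are the coefficients in the asymptotic expansion π_j(ε) = c_j[1] ε + c_j[2] ε² + o(ε²) of the stationary probability. -/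

import Mathlib

open Filter Finset Topology

noncomputable section

/-- Two-term Laurent asymptotic expansion:
`f ε = c0 * ε^h + c1 * ε^(h+1) + o(ε^(h+1))` as `ε → 0+`. -/
def laurent2 (f : ℝ → ℝ) (h : ℤ) (c0 c1 : ℝ) : Prop :=
  Filter.Tendsto (fun ε : ℝ => (f ε - c0 * ε ^ h - c1 * ε ^ (h + 1)) / ε ^ (h + 1))
    (nhdsWithin 0 (Set.Ioi 0)) (nhds 0)

/-- `Γ_{i,j,σ}(ε) = p_{i,σ}(ε) p_{i+1,σ}(ε) ⋯ p_{j,σ}(ε)`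
(the sign σ is encoded by a `Bool`: `false` = −, `true` = +). -/
def Gam (p : ℕ → Bool → ℝ → ℝ) (σ : Bool) (i j : ℕ) (ε : ℝ) : ℝ :=
  ∏ m ∈ Finset.Icc i j, p m σ ε

/-- `e_i(ε) = e_{i,−}(ε) + e_{i,+}(ε)`. -/
def eT (e : ℕ → Bool → ℝ → ℝ) (i : ℕ) (ε : ℝ) : ℝ := e i false ε + e i true ε

/-- The expected return time
`E_{ii}(ε) = e_i(ε) + ∑_{k<i} e_k(ε) Γ_{k+1,i,−}(ε)/Γ_{k,i−1,+}(ε)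
            + ∑_{i<k≤N} e_k(ε) Γ_{i,k−1,+}(ε)/Γ_{i+1,k,−}(ε)`. -/
def ret (p e : ℕ → Bool → ℝ → ℝ) (N i : ℕ) (ε : ℝ) : ℝ :=
  eT e i ε
    + ∑ k ∈ Finset.range i, eT e k ε * (Gam p false (k + 1) i ε / Gam p true k (i - 1) ε)
    + ∑ k ∈ Finset.Icc (i + 1) N, eT e k ε * (Gam p true i (k - 1) ε / Gam p false (i + 1) k ε)

/-- The stationary probability `π_i(ε) = e_i(ε) / E_{ii}(ε)`. -/
def statPi (p e : ℕ → Bool → ℝ → ℝ) (N i : ℕ) (ε : ℝ) : ℝ := eT e i ε / ret p e N i ε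

/-- `b_i[l] = b_{i,−}[l] + b_{i,+}[l]`. -/
def bT (b : ℕ → Bool → ℕ → ℝ) (i l : ℕ) : ℝ := b i false l + b i true l

/-- The conditional quasi-stationary probability `π̃_i(ε) = π_i(ε) / ∑_{j=1}^{N} π_j(ε)`. -/
def qPi (p e : ℕ → Bool → ℝ → ℝ) (N i : ℕ) (ε : ℝ) : ℝ :=
  statPi p e N i ε / ∑ j ∈ Finset.Icc 1 N, statPi p e N j ε

lemma laurent2_sum {ι : Type*} (s : Finset ι) (f : ι → ℝ → ℝ) (c0 c1 : ι → ℝ) (h : ℤ)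
    (hf : ∀ j ∈ s, laurent2 (f j) h (c0 j) (c1 j)) :
    laurent2 (fun ε => ∑ j ∈ s, f j ε) h (∑ j ∈ s, c0 j) (∑ j ∈ s, c1 j) := by
  unfold laurent2 at *
  have h1 := tendsto_finset_sum s hf
  simp only [Finset.sum_const_zero] at h1
  refine h1.congr fun ε => ?_
  rw [← Finset.sum_div, Finset.sum_sub_distrib, Finset.sum_sub_distrib,
    ← Finset.sum_mul, ← Finset.sum_mul]

lemma laurent2_div (f g : ℝ → ℝ) (c0 c1 d0 d1 : ℝ) (hd0 : d0 ≠ 0)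
    (hf : laurent2 f 1 c0 c1) (hg : laurent2 g 1 d0 d1) :
    laurent2 (fun ε => f ε / g ε) 0 (c0 / d0) ((c1 * d0 - c0 * d1) / d0 ^ 2) := by
  set u : ℝ → ℝ := fun ε => (f ε - c0 * ε ^ (1:ℤ) - c1 * ε ^ ((1:ℤ) + 1)) / ε ^ ((1:ℤ) + 1) with hu
  set v : ℝ → ℝ := fun ε => (g ε - d0 * ε ^ (1:ℤ) - d1 * ε ^ ((1:ℤ) + 1)) / ε ^ ((1:ℤ) + 1) with hv
  have hu0 : Tendsto u (𝓝[>] (0:ℝ)) (𝓝 0) := hf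
  have hv0 : Tendsto v (𝓝[>] (0:ℝ)) (𝓝 0) := hg
  have hid : Tendsto (fun ε : ℝ => ε) (𝓝[>] (0:ℝ)) (𝓝 0) :=
    tendsto_id.mono_left nhdsWithin_le_nhds
  have hB : Tendsto (fun ε => d0 + d1 * ε + v ε * ε) (𝓝[>] (0:ℝ)) (𝓝 d0) := by
    have h1 : Tendsto (fun ε : ℝ => d0 + d1 * ε + v ε * ε) (𝓝[>] (0:ℝ))
        (𝓝 (d0 + d1 * 0 + 0 * 0)) :=
      (tendsto_const_nhds.add (hid.const_mul d1)).add (hv0.mul hid)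
    simpa using h1
  have hBne : ∀ᶠ ε in 𝓝[>] (0:ℝ), d0 + d1 * ε + v ε * ε ≠ 0 := hB.eventually_ne hd0
  set K := c1 * d0 - c0 * d1 with hK
  have hT : Tendsto (fun ε => (K + u ε * d0 - c0 * v ε) / ((d0 + d1 * ε + v ε * ε) * d0)
      - K / d0 ^ 2) (𝓝[>] (0:ℝ)) (𝓝 0) := by
    have hnum : Tendsto (fun ε => K + u ε * d0 - c0 * v ε) (𝓝[>] (0:ℝ)) (𝓝 K) := by
      have h1 : Tendsto (fun ε : ℝ => K + u ε * d0 - c0 * v ε) (𝓝[>] (0:ℝ))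
          (𝓝 (K + 0 * d0 - c0 * 0)) :=
        (tendsto_const_nhds.add (hu0.mul_const d0)).sub (hv0.const_mul c0)
      simpa using h1
    have hden : Tendsto (fun ε => (d0 + d1 * ε + v ε * ε) * d0) (𝓝[>] (0:ℝ)) (𝓝 (d0 * d0)) :=
      hB.mul tendsto_const_nhds
    have := (hnum.div hden (mul_ne_zero hd0 hd0)).sub (tendsto_const_nhds (x := K / d0 ^ 2))
    have heq : K / (d0 * d0) - K / d0 ^ 2 = 0 := by rw [sq]; ring
    rwa [heq] at this
  unfold laurent2
  refine hT.congr' ?_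
  filter_upwards [hBne, self_mem_nhdsWithin] with ε hB0 hε
  have hεne : ε ≠ 0 := ne_of_gt hε
  have e1 : (ε : ℝ) ^ (1:ℤ) = ε := zpow_one ε
  have e2 : (ε : ℝ) ^ ((1:ℤ) + 1) = ε ^ (2:ℕ) := by
    rw [show ((1:ℤ) + 1) = ((2:ℕ):ℤ) by norm_num, zpow_natCast]
  have hfε : f ε = c0 * ε + c1 * ε ^ 2 + u ε * ε ^ 2 := by
    rw [hu]; simp only [e1, e2]
    field_simp
    ring
  have hgε : g ε = ε * (d0 + d1 * ε + v ε * ε) := by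
    rw [hv]; simp only [e1, e2]
    field_simp
    ring
  have e0 : (ε : ℝ) ^ (0:ℤ) = 1 := zpow_zero ε
  have e01 : (ε : ℝ) ^ ((0:ℤ) + 1) = ε := by
    rw [show ((0:ℤ) + 1) = (1:ℤ) by norm_num, zpow_one]
  simp only [e0, e01, mul_one]
  rw [hfε, hgε, hK]
  field_simp
  ring

/-- Theorem 3(ii), scenario H₂: under conditions (D₁, E₁, H₂), if for each `j ∈ {1,…,N}`
the numbers `c j 1 > 0` and `c j 2` are the coefficients in the asymptotic expansion
`π_j(ε) = c_j[1] ε + c_j[2] ε² + o(ε²)`, then, with `d[l] = ∑_{j=1}^{N} c_j[l]`, the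
conditional quasi-stationary probabilities satisfy
`π̃_i(ε) = c̃_i[0] + c̃_i[1] ε + o(ε)` with `c̃_i[0] = c_i[1]/d[1] > 0` and
`c̃_i[1] = (c_i[2] d[1] − c_i[1] d[2]) / d[1]²`. -/
theorem theorem3_ii_H2
    (N : ℕ) (hN : 1 ≤ N) (ε₀ : ℝ) (hε₀ : 0 < ε₀) (hε₁ : ε₀ ≤ 1)
    (p e : ℕ → Bool → ℝ → ℝ)
    (hpos : ∀ i ≤ N, ∀ σ : Bool, ∀ ε ∈ Set.Ioc (0 : ℝ) ε₀, 0 < p i σ ε ∧ 0 < e i σ ε)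
    (hone : ∀ i ≤ N, ∀ ε ∈ Set.Ioc (0 : ℝ) ε₀, p i false ε + p i true ε = 1)
    (a b : ℕ → Bool → ℕ → ℝ)
    (hD : ∀ i ≤ N, ∀ σ : Bool, ¬(i = 0 ∧ σ = true) →
      0 < a i σ 0 ∧ laurent2 (p i σ) 0 (a i σ 0) (a i σ 1))
    (hD0 : 0 < a 0 true 1 ∧ laurent2 (p 0 true) 1 (a 0 true 1) (a 0 true 2))
    (hE : ∀ i ≤ N, ∀ σ : Bool, ¬(i = 0 ∧ σ = true) →
      0 < b i σ 0 ∧ laurent2 (e i σ) 0 (b i σ 0) (b i σ 1))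
    (hE0 : 0 < b 0 true 1 ∧ laurent2 (e 0 true) 1 (b 0 true 1) (b 0 true 2))
    (c : ℕ → ℕ → ℝ)
    (hc : ∀ j, 1 ≤ j → j ≤ N → 0 < c j 1 ∧ laurent2 (statPi p e N j) 1 (c j 1) (c j 2)) :
    ∀ i, 1 ≤ i → i ≤ N →
      laurent2 (qPi p e N i) 0
          (c i 1 / ∑ j ∈ Finset.Icc 1 N, c j 1)
          ((c i 2 * (∑ j ∈ Finset.Icc 1 N, c j 1) - c i 1 * ∑ j ∈ Finset.Icc 1 N, c j 2)
            / (∑ j ∈ Finset.Icc 1 N, c j 1) ^ 2) ∧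
        0 < c i 1 / ∑ j ∈ Finset.Icc 1 N, c j 1 := by
  intro i h1i hiN
  have hne : (Finset.Icc 1 N).Nonempty := ⟨1, by simp [hN]⟩
  have hd1pos : 0 < ∑ j ∈ Finset.Icc 1 N, c j 1 :=
    Finset.sum_pos
      (fun j hj => (hc j (Finset.mem_Icc.mp hj).1 (Finset.mem_Icc.mp hj).2).1) hne
  refine ⟨?_, div_pos (hc i h1i hiN).1 hd1pos⟩
  have hsum : laurent2 (fun ε => ∑ j ∈ Finset.Icc 1 N, statPi p e N j ε) 1
      (∑ j ∈ Finset.Icc 1 N, c j 1) (∑ j ∈ Finset.Icc 1 N, c j 2) :=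
    laurent2_sum _ _ _ _ _
      (fun j hj => (hc j (Finset.mem_Icc.mp hj).1 (Finset.mem_Icc.mp hj).2).2)
  have h := laurent2_div (statPi p e N i)
    (fun ε => ∑ j ∈ Finset.Icc 1 N, statPi p e N j ε)
    (c i 1) (c i 2) _ _ (ne_of_gt hd1pos) (hc i h1i hiN).2 hsum
  exact h
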